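/- Let (Ω, μ) be a probability space, c ≥ 1 an integer, and X : Fin c → Ω → Bool a mutually independent family of Boolean random variables such that μ({ω : X s ω = true}) ≥ p₀ for every s ∈ Fin c, where p₀ ∈ (0, 1]. Let λ ∈ (0, 1) and ξ > 0 satisfy 1/2 + ξ ≤ (1 − λ)·p₀. Then μ({ω : (|{s : X s ω = true}| : ℝ) ≤ (1/2 + ξ)·c}) ≤ exp(−λ²·p₀·c/2). In particular, the probability that the true values fail to form a strict majority, μ({ω : 2·|{s : X s ω = true}| ≤ c}), is at most exp(−λ²·p₀·c/2). -/

import Mathlib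

open MeasureTheory ProbabilityTheory

lemma chernoff_log_key {lam : ℝ} (h0 : 0 < lam) (h1 : lam < 1) :
    -((1 - lam) * Real.log (1 - lam)) - lam ≤ -(lam ^ 2 / 2) := by
  set u : ℝ := 1 - lam with hu_def
  have hu : 0 < u := by simp [hu_def]; linarith
  have hu1 : u < 1 := by simp [hu_def]; linarith
  have hx : 0 ≤ -Real.log u := by
    have := Real.log_neg hu hu1; linarith
  have hsinh : -Real.log u ≤ Real.sinh (-Real.log u) := Real.self_le_sinh_iff.mpr hx
  rw [Real.sinh_eq] at hsinh
  have he1 : Real.exp (-Real.log u) = u⁻¹ := by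
    rw [Real.exp_neg, Real.exp_log hu]
  have he2 : Real.exp (-(-Real.log u)) = u := by
    rw [neg_neg, Real.exp_log hu]
  rw [he1, he2] at hsinh
  have hmul : u * (-Real.log u) ≤ u * ((u⁻¹ - u) / 2) :=
    mul_le_mul_of_nonneg_left hsinh hu.le
  have hinv : u * u⁻¹ = 1 := mul_inv_cancel₀ hu.ne'
  have : -(u * Real.log u) ≤ (1 - u ^ 2) / 2 := by nlinarith [hmul, hinv]
  nlinarith [this]

theorem chernoff_majority {Ω : Type*} [MeasurableSpace Ω] (μ : Measure Ω)
    [IsProbabilityMeasure μ] {c : ℕ} (hc : 1 ≤ c)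
    (X : Fin c → Ω → Bool) (hmeas : ∀ s, Measurable (X s))
    (hindep : iIndepFun X μ)
    (p₀ : ℝ) (hp₀ : 0 < p₀) (hp₀1 : p₀ ≤ 1)
    (hp : ∀ s, ENNReal.ofReal p₀ ≤ μ {ω | X s ω = true})
    (lam ξ : ℝ) (hlam0 : 0 < lam) (hlam1 : lam < 1) (hξ : 0 < ξ)
    (hcond : 1 / 2 + ξ ≤ (1 - lam) * p₀) :
    μ {ω | ((Finset.univ.filter (fun s => X s ω = true)).card : ℝ) ≤ (1 / 2 + ξ) * c}
        ≤ ENNReal.ofReal (Real.exp (-(lam ^ 2 * p₀ * c) / 2)) ∧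
    μ {ω | 2 * (Finset.univ.filter (fun s => X s ω = true)).card ≤ c}
        ≤ ENNReal.ofReal (Real.exp (-(lam ^ 2 * p₀ * c) / 2)) := by
  classical
  have hul : (0:ℝ) < 1 - lam := by linarith
  set t : ℝ := Real.log (1 - lam) with ht_def
  have ht_neg : t < 0 := Real.log_neg hul (by linarith)
  have het : Real.exp t = 1 - lam := Real.exp_log hul
  set Y : Fin c → Ω → ℝ := fun s ω => if X s ω = true then 1 else 0 with hY_def
  have hA : ∀ s, MeasurableSet {ω | X s ω = true} := fun s =>
    (hmeas s) (MeasurableSet.singleton true)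
  have hYmeas : ∀ s, Measurable (Y s) := fun s =>
    Measurable.ite (hA s) measurable_const measurable_const
  have hYindep : iIndepFun Y μ :=
    hindep.comp (fun _ b => if b = true then (1:ℝ) else 0) (fun _ => measurable_from_top)
  -- exp (t * Y s ω) as indicator + 1
  have heq : ∀ s, (fun ω => Real.exp (t * Y s ω)) =
      fun ω => Set.indicator {ω | X s ω = true} (fun _ => Real.exp t - 1) ω + 1 := by
    intro s
    funext ω
    by_cases h : X s ω = true <;>
      simp [hY_def, h, Set.indicator_apply, Set.mem_setOf_eq, mul_one, mul_zero, Real.exp_zero]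
  have h_int : ∀ s, Integrable (fun ω => Real.exp (t * Y s ω)) μ := by
    intro s
    rw [heq s]
    exact ((integrable_const _).indicator (hA s)).add (integrable_const 1)
  have hmgf : ∀ s, mgf (Y s) μ t = 1 + (Real.exp t - 1) * (μ {ω | X s ω = true}).toReal := by
    intro s
    rw [mgf, heq s, integral_add ((integrable_const _).indicator (hA s)) (integrable_const 1),
      integral_indicator_const _ (hA s), integral_const]
    simp [measure_univ]
    simp only [measureReal_def]
    ring
  -- per-variable bound
  have hps : ∀ s, p₀ ≤ (μ {ω | X s ω = true}).toReal := by
    intro s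
    have h1 : (ENNReal.ofReal p₀).toReal ≤ (μ {ω | X s ω = true}).toReal :=
      ENNReal.toReal_mono (measure_ne_top μ _) (hp s)
    rwa [ENNReal.toReal_ofReal hp₀.le] at h1
  have hps1 : ∀ s, (μ {ω | X s ω = true}).toReal ≤ 1 := fun s =>
    ENNReal.toReal_le_of_le_ofReal one_pos.le (by simpa using prob_le_one)
  have hmgf_le : ∀ s, mgf (Y s) μ t ≤ Real.exp (-(lam * p₀)) := by
    intro s
    rw [hmgf s, het]
    have h2 : 1 + (1 - lam - 1) * (μ {ω | X s ω = true}).toReal ≤ 1 - lam * p₀ := by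
      have := hps s; nlinarith
    refine h2.trans ?_
    have := Real.add_one_le_exp (-(lam * p₀))
    linarith
  -- Chernoff
  set a : ℝ := (1 / 2 + ξ) * c with ha_def
  have hsum_int : Integrable (fun ω => Real.exp (t * (∑ i, Y i) ω)) μ :=
    hYindep.integrable_exp_mul_sum hYmeas (fun i _ => h_int i)
  have hcher : (μ {ω | (∑ i, Y i) ω ≤ a}).toReal ≤
      Real.exp (-t * a) * mgf (∑ i, Y i) μ t :=
    measure_le_le_exp_mul_mgf a ht_neg.le hsum_int
  rw [hYindep.mgf_sum hYmeas Finset.univ] at hcher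
  have hprod : ∏ s : Fin c, mgf (Y s) μ t ≤ Real.exp (-(lam * p₀)) ^ c := by
    calc ∏ s : Fin c, mgf (Y s) μ t ≤ ∏ s : Fin c, Real.exp (-(lam * p₀)) :=
          Finset.prod_le_prod (fun s _ => mgf_nonneg) (fun s _ => hmgf_le s)
      _ = Real.exp (-(lam * p₀)) ^ c := by simp
  have hcn : (0:ℝ) ≤ c := Nat.cast_nonneg c
  have hexp_bound : Real.exp (-t * a) * Real.exp (-(lam * p₀)) ^ c ≤
      Real.exp (-(lam ^ 2 * p₀ * c) / 2) := by
    rw [← Real.exp_nat_mul, ← Real.exp_add, Real.exp_le_exp]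
    have hta : -t * a ≤ -t * ((1 - lam) * p₀ * c) := by
      have hnt : 0 ≤ -t := by linarith
      have haa : a ≤ (1 - lam) * p₀ * c := by
        rw [ha_def]
        have := mul_le_mul_of_nonneg_right hcond hcn
        linarith
      exact mul_le_mul_of_nonneg_left haa hnt
    have hkey := chernoff_log_key hlam0 hlam1
    have hfin : -t * ((1 - lam) * p₀ * c) + c * -(lam * p₀) ≤ -(lam ^ 2 * p₀ * c) / 2 := by
      have h3 : (-((1 - lam) * t) - lam) * (p₀ * c) ≤ -(lam ^ 2 / 2) * (p₀ * c) := by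
        have hpc : (0:ℝ) ≤ p₀ * c := mul_nonneg hp₀.le hcn
        exact mul_le_mul_of_nonneg_right hkey hpc
      nlinarith [h3]
    linarith
  have hfinal : (μ {ω | (∑ i, Y i) ω ≤ a}).toReal ≤ Real.exp (-(lam ^ 2 * p₀ * c) / 2) := by
    refine hcher.trans (le_trans ?_ hexp_bound)
    exact mul_le_mul_of_nonneg_left hprod (Real.exp_pos _).le
  -- identify the set
  have hset : {ω | ((Finset.univ.filter (fun s => X s ω = true)).card : ℝ) ≤ (1 / 2 + ξ) * c}
      = {ω | (∑ i, Y i) ω ≤ a} := by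
    ext ω
    simp only [Set.mem_setOf_eq, Finset.sum_apply, ha_def]
    rw [Finset.card_filter]
    push_cast
    rfl
  have hbound1 : μ {ω | ((Finset.univ.filter (fun s => X s ω = true)).card : ℝ) ≤ (1 / 2 + ξ) * c}
      ≤ ENNReal.ofReal (Real.exp (-(lam ^ 2 * p₀ * c) / 2)) := by
    rw [hset, ← ENNReal.ofReal_toReal (measure_ne_top μ _)]
    exact ENNReal.ofReal_le_ofReal hfinal
  refine ⟨hbound1, le_trans (measure_mono ?_) hbound1⟩
  intro ω hω
  simp only [Set.mem_setOf_eq] at hω ⊢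
  have hcpos : (0:ℝ) < c := by exact_mod_cast hc
  have : ((Finset.univ.filter (fun s => X s ω = true)).card : ℝ) ≤ c / 2 := by
    have : ((2 * (Finset.univ.filter (fun s => X s ω = true)).card : ℕ) : ℝ) ≤ c := by
      exact_mod_cast hω
    push_cast at this
    linarith
  nlinarith
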